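/- Let T be an abelian category with objects B, A, C, and suppose given exact functors Wb, Wa : T → T (each preserving short exact sequences), natural transformations εb : Wb ⟹ Id_T and εa : Wa ⟹ Id_T all of whose components are monomorphisms, and a natural transformation η : Wb ⟹ Wa with εa ∘ η = εb, such that: the components of εb and εa at B are isomorphisms, the component of εa at A is an isomorphism, Wb(A) ≅ 0, Wb(C) ≅ 0, and Wa(C) ≅ 0. Let ℒ : 0 → B →ι_L→ L →π_L→ A → 0 and 𝒩 : 0 → A →ι_N→ N →π_N→ C → 0 be short exact sequences, and suppose M is an object attached to the pair (ℒ, 𝒩). Then there are isomorphisms B ≅ Wb(M), A ≅ coker(η_M : Wb(M) → Wa(M)), and C ≅ coker(εa at M : Wa(M) → M). -/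

import Mathlib

/-!
STATEMENT 10: (Proposition 6.6(b) of the paper.) Let `T` be an abelian
category with objects `B`, `A`, `C`, exact functors `Wb`, `Wa : T ⥤ T`,
natural transformations `εb : Wb ⟶ 𝟭 T`, `εa : Wa ⟶ 𝟭 T` with monic
components, and `η : Wb ⟶ Wa` with `η ≫ εa = εb`, such that the
components of `εb`, `εa` at `B` and of `εa` at `A` are isomorphisms,
and `Wb(A)`, `Wb(C)`, `Wa(C)` are zero. If `M` is attached to a pair
`(ℒ, 𝒩)` of short exact sequences `0 → B → L → A → 0`,
`0 → A → N → C → 0`, then `B ≅ Wb(M)`, `A ≅ coker(η_M)` and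
`C ≅ coker((εa)_M)`.
-/

open CategoryTheory CategoryTheory.Limits

universe v u

variable {T : Type u} [Category.{v} T] [Abelian T]

/-- `M` is attached to the pair of extensions `(ℒ, 𝒩)` given by
`ιL, πL, ιN, πN` (an *extension panachée*). -/
def IsAttached {B L A N C : T}
    (ιL : B ⟶ L) (πL : L ⟶ A) (ιN : A ⟶ N) (πN : N ⟶ C) (M : T) : Prop :=
  ∃ (α : L ⟶ M) (p : M ⟶ N) (w₁ : (ιL ≫ α) ≫ p = 0) (w₂ : α ≫ p ≫ πN = 0),
    (ShortComplex.mk (ιL ≫ α) p w₁).ShortExact ∧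
    (ShortComplex.mk α (p ≫ πN) w₂).ShortExact ∧
    α ≫ p = πL ≫ ιN

theorem weight_pieces_of_attached
    (Wb Wa : T ⥤ T)
    [PreservesFiniteLimits Wb] [PreservesFiniteColimits Wb]
    [PreservesFiniteLimits Wa] [PreservesFiniteColimits Wa]
    (εb : Wb ⟶ 𝟭 T) (εa : Wa ⟶ 𝟭 T) (η : Wb ⟶ Wa)
    (hεb : ∀ X : T, Mono (εb.app X)) (hεa : ∀ X : T, Mono (εa.app X))
    (hη : η ≫ εa = εb)
    {B A C : T}
    (hBb : IsIso (εb.app B)) (hBa : IsIso (εa.app B)) (hAa : IsIso (εa.app A))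
    (hAb : IsZero (Wb.obj A)) (hCb : IsZero (Wb.obj C)) (hCa : IsZero (Wa.obj C))
    {L N : T}
    (ιL : B ⟶ L) (πL : L ⟶ A) (wL : ιL ≫ πL = 0)
    (hL : (ShortComplex.mk ιL πL wL).ShortExact)
    (ιN : A ⟶ N) (πN : N ⟶ C) (wN : ιN ≫ πN = 0)
    (hN : (ShortComplex.mk ιN πN wN).ShortExact)
    {M : T} (hM : IsAttached ιL πL ιN πN M) :
    Nonempty (B ≅ Wb.obj M) ∧
    Nonempty (A ≅ cokernel (η.app M)) ∧
    Nonempty (C ≅ cokernel (εa.app M)) := by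
  obtain ⟨α, p, w₁, w₂, hS1, hS2, hcomm⟩ := hM
  -- `Wb N` is zero
  have hNb := hN.map_of_exact Wb
  have hWbN : IsZero (Wb.obj N) := by
    have hf0 : Wb.map ιN = 0 := hAb.eq_of_src _ _
    have h1 : Mono (Wb.map πN) := hNb.exact.mono_g hf0
    have h2 : Epi (Wb.map πN) := hNb.epi_g
    have : IsIso (Wb.map πN) := isIso_of_mono_of_epi _
    exact hCb.of_iso (asIso (Wb.map πN))
  -- `Wb.map (ιL ≫ α)` is an isomorphism
  have hS1b := hS1.map_of_exact Wb
  have hp0 : Wb.map p = 0 := hWbN.eq_of_tgt _ _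
  have hepi : Epi (Wb.map (ιL ≫ α)) := hS1b.exact.epi_f hp0
  have hmono : Mono (Wb.map (ιL ≫ α)) := hS1b.mono_f
  have hiso1 : IsIso (Wb.map (ιL ≫ α)) := isIso_of_mono_of_epi _
  -- the first isomorphism
  let e1 : B ≅ Wb.obj M := (asIso (εb.app B)).symm ≪≫ asIso (Wb.map (ιL ≫ α))
  -- `Wa.map α` is an isomorphism
  have hS2a := hS2.map_of_exact Wa
  have hg0 : Wa.map (p ≫ πN) = 0 := hCa.eq_of_tgt _ _
  have hepi' : Epi (Wa.map α) := hS2a.exact.epi_f hg0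
  have hmono' : Mono (Wa.map α) := hS2a.mono_f
  have hiso2 : IsIso (Wa.map α) := isIso_of_mono_of_epi _
  -- `εa.app L` is an isomorphism (five lemma)
  have hLa := hL.map_of_exact Wa
  have hisoL : IsIso (εa.app L) := by
    let φ : (ShortComplex.mk ιL πL wL).map Wa ⟶ ShortComplex.mk ιL πL wL :=
      { τ₁ := εa.app B
        τ₂ := εa.app L
        τ₃ := εa.app A
        comm₁₂ := by exact (εa.naturality ιL).symm
        comm₂₃ := by exact (εa.naturality πL).symm }
    exact ShortComplex.isIso₂_of_shortExact_of_isIso₁₃' φ hLa hL hBa hAa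
  let vL : L ≅ Wa.obj M := (asIso (εa.app L)).symm ≪≫ asIso (Wa.map α)
  -- cokernel identifications
  have eA : cokernel ιL ≅ A :=
    IsColimit.coconePointUniqueUpToIso (colimit.isColimit _) hL.gIsCokernel
  have eC : cokernel α ≅ C :=
    IsColimit.coconePointUniqueUpToIso (colimit.isColimit _) hS2.gIsCokernel
  -- commutation for the second isomorphism
  have wcomm2 : ιL ≫ vL.hom = e1.hom ≫ η.app M := by
    have h1 : εb.app B ≫ ιL = η.app B ≫ Wa.map ιL ≫ εa.app L := by
      have := εa.naturality ιL
      simp only [Functor.id_map] at this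
      rw [this, ← Category.assoc, ← NatTrans.comp_app, hη]
    have h2 : Wb.map (ιL ≫ α) ≫ η.app M = η.app B ≫ Wa.map (ιL ≫ α) :=
      η.naturality _
    simp only [Iso.trans_hom, Iso.symm_hom, asIso_inv, asIso_hom, e1, vL,
      Category.assoc]
    rw [h2]
    rw [← cancel_epi (εb.app B)]
    simp only [IsIso.hom_inv_id_assoc]
    rw [← Category.assoc, h1]
    simp only [Wa.map_comp, Category.assoc, IsIso.hom_inv_id_assoc]
  have wcomm3 : α ≫ (Iso.refl M).hom = vL.hom ≫ εa.app M := by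
    have := εa.naturality α
    simp only [Functor.id_map] at this
    simp [vL, this]
  have e2 : A ≅ cokernel (η.app M) :=
    eA.symm ≪≫ cokernel.mapIso (f := ιL) (η.app M) e1 vL wcomm2
  have e3 : C ≅ cokernel (εa.app M) :=
    eC.symm ≪≫ cokernel.mapIso (f := α) (εa.app M) vL (Iso.refl M) wcomm3
  exact ⟨⟨e1⟩, ⟨e2⟩, ⟨e3⟩⟩
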